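/- arXiv:math/0510489 — 6 statements merged into one kernel-verified Lean document; each statement's English description precedes it below -/
import Mathlib

section
/- Let E be a real vector space, let A and B be convex subsets of E, and let x be an extreme point of the Minkowski sum A + B. Then there exist unique points a ∈ A and b ∈ B with x = a + b; moreover a is an extreme point of A and b is an extreme point of B. (This is the vertex-decomposition fact for Minkowski sums of polyhedra underlying the paper's Lemma on normal quasifans of Minkowski sums.) -/
open Pointwise

/-- Vertex decomposition for Minkowski sums: an extreme point of `A + B`
decomposes uniquely as `a + b` with `a ∈ A`, `b ∈ B`, and the summands are
extreme points of `A` and `B` respectively. -/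
theorem extremePoint_of_minkowski_sum_decomposition
    {E : Type*} [AddCommGroup E] [Module ℝ E]
    (A B : Set E) (hA : Convex ℝ A) (hB : Convex ℝ B)
    (x : E) (hx : x ∈ (A + B).extremePoints ℝ) :
    ∃ a b : E, a ∈ A ∧ b ∈ B ∧ x = a + b ∧
      a ∈ A.extremePoints ℝ ∧ b ∈ B.extremePoints ℝ ∧
      ∀ a' b' : E, a' ∈ A → b' ∈ B → x = a' + b' → a' = a ∧ b' = b := by
  obtain ⟨hxmem, hext⟩ := hx
  obtain ⟨a, ha, b, hb, rfl⟩ := hxmem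
  -- uniqueness first
  have huniq : ∀ a' b' : E, a' ∈ A → b' ∈ B → a + b = a' + b' → a' = a ∧ b' = b := by
    intro a' b' ha' hb' heq
    have h1 : a + b' ∈ A + B := Set.add_mem_add ha hb'
    have h2 : a' + b ∈ A + B := Set.add_mem_add ha' hb
    have hmem : a + b ∈ openSegment ℝ (a + b') (a' + b) := by
      refine ⟨1/2, 1/2, by norm_num, by norm_num, by norm_num, ?_⟩
      linear_combination (norm := module) (-(2⁻¹ : ℝ)) • heq
    obtain ⟨e1, e2⟩ := (mem_extremePoints.1 ⟨Set.add_mem_add ha hb, hext⟩).2 _ h1 _ h2 hmem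
    constructor
    · have := e2
      have : a' = a := by
        have h := add_right_cancel this
        exact h
      exact this
    · have : b' = b := by
        have h := add_left_cancel e1
        exact h
      exact this
  refine ⟨a, b, ha, hb, rfl, ?_, ?_, huniq⟩
  · refine ⟨ha, ?_⟩
    intro a₁ h₁ a₂ h₂ hseg
    obtain ⟨t, u, ht, hu, htu, hsum⟩ := hseg
    have hmem : a + b ∈ openSegment ℝ (a₁ + b) (a₂ + b) := by
      refine ⟨t, u, ht, hu, htu, ?_⟩
      rw [smul_add, smul_add]
      have : t • a₁ + u • a₂ + (t • b + u • b) = a + b := by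
        rw [hsum, ← add_smul, htu, one_smul]
      linear_combination (norm := abel) this
    obtain ⟨e1, e2⟩ := (mem_extremePoints.1 ⟨Set.add_mem_add ha hb, hext⟩).2 _ (Set.add_mem_add h₁ hb) _ (Set.add_mem_add h₂ hb) hmem
    exact add_right_cancel e1
  · refine ⟨hb, ?_⟩
    intro b₁ h₁ b₂ h₂ hseg
    obtain ⟨t, u, ht, hu, htu, hsum⟩ := hseg
    have hmem : a + b ∈ openSegment ℝ (a + b₁) (a + b₂) := by
      refine ⟨t, u, ht, hu, htu, ?_⟩
      rw [smul_add, smul_add]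
      have : t • b₁ + u • b₂ + (t • a + u • a) = b + a := by
        rw [hsum, ← add_smul, htu, one_smul]
      linear_combination (norm := abel) this
    obtain ⟨e1, e2⟩ := (mem_extremePoints.1 ⟨Set.add_mem_add ha hb, hext⟩).2 _ (Set.add_mem_add ha h₁) _ (Set.add_mem_add ha h₂) hmem
    exact add_left_cancel e1
end

section
/- Let E be a finite-dimensional real inner product space, let A, B ⊆ E be nonempty subsets, and let u ∈ E. Then the set of minimizers of w ↦ ⟪u, w⟫ on the Minkowski sum A + B equals the Minkowski sum of the set of minimizers of ⟪u, ·⟫ on A and the set of minimizers of ⟪u, ·⟫ on B, i.e. {x ∈ A + B : ∀ y ∈ A + B, ⟪u, x⟫ ≤ ⟪u, y⟫} = {a ∈ A : ∀ a' ∈ A, ⟪u, a⟫ ≤ ⟪u, a'⟫} + {b ∈ B : ∀ b' ∈ B, ⟪u, b⟫ ≤ ⟪u, b'⟫}. (This expresses that the face of a Minkowski sum in direction u is the sum of the faces, so the normal quasifan of a Minkowski sum is the coarsest common refinement of the normal quasifans of the summands.) -/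
open Pointwise

/-- The set of minimizers of `w ↦ ⟪u, w⟫` on a Minkowski sum `A + B` is the
Minkowski sum of the sets of minimizers on `A` and on `B`. -/
theorem minimizers_inner_minkowski_sum
    {E : Type*} [NormedAddCommGroup E] [InnerProductSpace ℝ E]
    [FiniteDimensional ℝ E]
    (A B : Set E) (hA : A.Nonempty) (hB : B.Nonempty) (u : E) :
    {x ∈ A + B | ∀ y ∈ A + B, (inner ℝ u x : ℝ) ≤ inner ℝ u y}
      = {a ∈ A | ∀ a' ∈ A, (inner ℝ u a : ℝ) ≤ inner ℝ u a'}
        + {b ∈ B | ∀ b' ∈ B, (inner ℝ u b : ℝ) ≤ inner ℝ u b'} := by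
  ext x
  constructor
  · rintro ⟨⟨a, ha, b, hb, rfl⟩, hmin⟩
    refine ⟨a, ⟨ha, fun a' ha' => ?_⟩, b, ⟨hb, fun b' hb' => ?_⟩, rfl⟩
    · have := hmin (a' + b) ⟨a', ha', b, hb, rfl⟩
      simp only [inner_add_right] at this
      linarith
    · have := hmin (a + b') ⟨a, ha, b', hb', rfl⟩
      simp only [inner_add_right] at this
      linarith
  · rintro ⟨a, ⟨ha, hamin⟩, b, ⟨hb, hbmin⟩, rfl⟩
    refine ⟨⟨a, ha, b, hb, rfl⟩, ?_⟩
    rintro y ⟨a', ha', b', hb', rfl⟩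
    simp only [inner_add_right]
    exact add_le_add (hamin a' ha') (hbmin b' hb')
end

section
/- Let E be a finite-dimensional real inner product space, let σ ⊆ E be a pointed polyhedral cone, and for i = 1, …, r let Δ_i ⊆ E be σ-polyhedra. Fix extreme points v_i of Δ_i and set λ_i := N(Δ_i, v_i). Then the following are equivalent: (i) the point v := v₁ + ⋯ + v_r is an extreme point of the Minkowski sum Δ := Δ₁ + ⋯ + Δ_r; (ii) the cone λ := λ₁ ∩ ⋯ ∩ λ_r has nonempty interior in E. Moreover, if these hold, then λ = N(Δ, v). (This is the paper's Lemma on Minkowski sums: v is a vertex of Δ if and only if λ is a maximal cone of the normal quasifan Λ(Δ), maximal cones being exactly the full-dimensional ones since σ is pointed.) -/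
open Pointwise

/-- The normal cone of a subset `Δ` at a point `v`. -/
def normalCone {E : Type*} [NormedAddCommGroup E] [InnerProductSpace ℝ E]
    (Δ : Set E) (v : E) : Set E :=
  {u : E | ∀ w ∈ Δ, (inner ℝ u v : ℝ) ≤ inner ℝ u w}

/-- `σ` is a polyhedral cone: the set of nonnegative linear combinations of a
finite subset of `E`. -/
def IsPolyhedralCone {E : Type*} [AddCommGroup E] [Module ℝ E] (σ : Set E) : Prop :=
  ∃ S : Finset E, σ = {x : E | ∃ c : E → ℝ, (∀ s, 0 ≤ c s) ∧ x = ∑ s ∈ S, c s • s}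

/-- `Δ` is a `σ`-polyhedron: the Minkowski sum of the convex hull of a finite
nonempty set with the cone `σ`. -/
def IsSigmaPolyhedron {E : Type*} [AddCommGroup E] [Module ℝ E]
    (σ Δ : Set E) : Prop :=
  ∃ F : Finset E, F.Nonempty ∧ Δ = convexHull ℝ (↑F : Set E) + σ

section Aux
variable {E : Type*} [NormedAddCommGroup E] [InnerProductSpace ℝ E]

lemma cone_zero_mem {σ : Set E} (hσ : IsPolyhedralCone σ) : (0:E) ∈ σ := by
  obtain ⟨S, rfl⟩ := hσ
  exact ⟨fun _ => 0, fun s => le_rfl, by simp⟩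

lemma cone_add_mem {σ : Set E} (hσ : IsPolyhedralCone σ) {x y : E} (hx : x ∈ σ) (hy : y ∈ σ) :
    x + y ∈ σ := by
  obtain ⟨S, rfl⟩ := hσ
  obtain ⟨c, hc, rfl⟩ := hx
  obtain ⟨d, hd, rfl⟩ := hy
  exact ⟨c + d, fun s => add_nonneg (hc s) (hd s),
    by simp [add_smul, Finset.sum_add_distrib]⟩

lemma cone_smul_mem {σ : Set E} (hσ : IsPolyhedralCone σ) {t : ℝ} (ht : 0 ≤ t) {x : E}
    (hx : x ∈ σ) : t • x ∈ σ := by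
  obtain ⟨S, rfl⟩ := hσ
  obtain ⟨c, hc, rfl⟩ := hx
  exact ⟨fun s => t * c s, fun s => mul_nonneg ht (hc s),
    by simp [Finset.smul_sum, smul_smul]⟩

lemma cone_sum_mem {σ : Set E} (hσ : IsPolyhedralCone σ) {ι : Type*} (t : Finset ι)
    (w : ι → ℝ) (z : ι → E) (hw : ∀ i ∈ t, 0 ≤ w i) (hz : ∀ i ∈ t, z i ∈ σ) :
    ∑ i ∈ t, w i • z i ∈ σ := by
  classical
  induction t using Finset.induction_on with
  | empty => simpa using cone_zero_mem hσ
  | @insert a s ha ih =>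
    rw [Finset.sum_insert ha]
    exact cone_add_mem hσ
      (cone_smul_mem hσ (hw a (Finset.mem_insert_self a s)) (hz a (Finset.mem_insert_self a s)))
      (ih (fun i hi => hw i (Finset.mem_insert_of_mem hi))
          (fun i hi => hz i (Finset.mem_insert_of_mem hi)))

lemma cone_convex {σ : Set E} (hσ : IsPolyhedralCone σ) : Convex ℝ σ :=
  fun _ hx _ hy _ _ ha hb _ =>
    cone_add_mem hσ (cone_smul_mem hσ ha hx) (cone_smul_mem hσ hb hy)

end Aux

section Aux2
variable {E : Type*} [NormedAddCommGroup E] [InnerProductSpace ℝ E]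

lemma mem_extremePoints_of_interior_normalCone {Δ : Set E} {v : E} (hvΔ : v ∈ Δ)
    (h : (interior (normalCone Δ v)).Nonempty) : v ∈ Δ.extremePoints ℝ := by
  obtain ⟨u, hu⟩ := h
  refine ⟨hvΔ, fun a ha b hb hseg => ?_⟩
  obtain ⟨ta, tb, hta, htb, htab, hvv⟩ := hseg
  have huN : u ∈ normalCone Δ v := interior_subset hu
  by_cases hab : a = b
  · subst hab
    have hva : v = a := by rw [← hvv, ← add_smul, htab, one_smul]
    exact hva.symm
  exfalso
  obtain ⟨ε, hε, hball⟩ := Metric.mem_nhds_iff.1 (mem_interior_iff_mem_nhds.1 hu)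
  set d := a - b with hd
  have hdnorm : (0:ℝ) ≤ ‖d‖ := norm_nonneg d
  set δ := ε / (2 * (‖d‖ + 1)) with hδdef
  have hδ : 0 < δ := by positivity
  have hsmall : ‖δ • d‖ < ε := by
    rw [norm_smul, Real.norm_eq_abs, abs_of_pos hδ, hδdef, div_mul_eq_mul_div,
      div_lt_iff₀ (by positivity)]
    nlinarith
  have hmem1 : u + δ • d ∈ normalCone Δ v := by
    apply hball
    rw [Metric.mem_ball, dist_eq_norm, add_sub_cancel_left]
    exact hsmall
  have hmem2 : u - δ • d ∈ normalCone Δ v := by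
    apply hball
    rw [Metric.mem_ball, dist_eq_norm]
    rw [show u - δ • d - u = -(δ • d) by abel, norm_neg]
    exact hsmall
  have e1 := hmem1 a ha
  have e2 := hmem1 b hb
  have e3 := hmem2 a ha
  have e4 := hmem2 b hb
  have e5 := huN a ha
  have e6 := huN b hb
  simp only [inner_add_left, inner_sub_left, real_inner_smul_left] at e1 e2 e3 e4
  have hv' : (inner ℝ u v : ℝ) = ta * inner ℝ u a + tb * inner ℝ u b := by
    rw [← hvv, inner_add_right, real_inner_smul_right, real_inner_smul_right]
  have hW : (inner ℝ d v : ℝ) = ta * inner ℝ d a + tb * inner ℝ d b := by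
    rw [← hvv, inner_add_right, real_inner_smul_right, real_inner_smul_right]
  -- A = V and B = V
  have key : ta * ((inner ℝ u a : ℝ) - inner ℝ u v) + tb * ((inner ℝ u b : ℝ) - inner ℝ u v) = 0 := by
    have h1 : ta * (inner ℝ u a : ℝ) + tb * inner ℝ u b - (ta + tb) * inner ℝ u v = 0 := by
      rw [htab]; linarith [hv']
    nlinarith [h1]
  have hA0 : ta * ((inner ℝ u a : ℝ) - inner ℝ u v) = 0 := by
    have n1 : 0 ≤ ta * ((inner ℝ u a : ℝ) - inner ℝ u v) :=
      mul_nonneg hta.le (sub_nonneg.2 e5)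
    have n2 : 0 ≤ tb * ((inner ℝ u b : ℝ) - inner ℝ u v) :=
      mul_nonneg htb.le (sub_nonneg.2 e6)
    linarith
  have hB0 : tb * ((inner ℝ u b : ℝ) - inner ℝ u v) = 0 := by
    have n1 : 0 ≤ ta * ((inner ℝ u a : ℝ) - inner ℝ u v) :=
      mul_nonneg hta.le (sub_nonneg.2 e5)
    linarith
  have hAV : (inner ℝ u a : ℝ) = inner ℝ u v := by
    rcases mul_eq_zero.1 hA0 with h | h
    · exact absurd h hta.ne'
    · linarith
  have hBV : (inner ℝ u b : ℝ) = inner ℝ u v := by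
    rcases mul_eq_zero.1 hB0 with h | h
    · exact absurd h htb.ne'
    · linarith
  -- now extract inner ℝ d equalities
  have hPa : (inner ℝ d a : ℝ) = inner ℝ d v := by
    have h1 : δ * (inner ℝ d v : ℝ) ≤ δ * inner ℝ d a := by linarith
    have h2 : δ * (inner ℝ d a : ℝ) ≤ δ * inner ℝ d v := by linarith
    exact le_antisymm (le_of_mul_le_mul_left h2 hδ) (le_of_mul_le_mul_left h1 hδ)
  have hPb : (inner ℝ d b : ℝ) = inner ℝ d v := by
    have h1 : δ * (inner ℝ d v : ℝ) ≤ δ * inner ℝ d b := by linarith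
    have h2 : δ * (inner ℝ d b : ℝ) ≤ δ * inner ℝ d v := by linarith
    exact le_antisymm (le_of_mul_le_mul_left h2 hδ) (le_of_mul_le_mul_left h1 hδ)
  have hdd : (inner ℝ d d : ℝ) = 0 := by
    rw [hd, inner_sub_right]
    rw [← hd]; linarith
  have : d ≠ 0 := sub_ne_zero.2 hab
  exact this (inner_self_eq_zero.1 hdd)

lemma normalCone_sum {ι : Type*} [Fintype ι] (Δ : ι → Set E) (v : ι → E)
    (hv : ∀ i, v i ∈ Δ i) :
    (⋂ i, normalCone (Δ i) (v i)) = normalCone (∑ i, Δ i) (∑ i, v i) := by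
  classical
  ext u
  simp only [Set.mem_iInter]
  constructor
  · intro hu w hw
    obtain ⟨g, hg, rfl⟩ := (Set.mem_fintype_sum _ _).1 hw
    rw [inner_sum, inner_sum]
    exact Finset.sum_le_sum (fun i _ => hu i (g i) (hg i))
  · intro hu j w hw
    have hmem : w + ∑ i ∈ Finset.univ.erase j, v i ∈ ∑ i, Δ i := by
      rw [← Finset.add_sum_erase _ Δ (Finset.mem_univ j)]
      exact Set.add_mem_add hw
        (Set.finset_sum_mem_finset_sum _ _ _ (fun i _ => hv i))
    have h1 := hu _ hmem
    rw [← Finset.add_sum_erase _ v (Finset.mem_univ j), inner_add_right, inner_add_right] at h1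
    linarith
end Aux2

section Aux3
variable {E : Type*} [NormedAddCommGroup E] [InnerProductSpace ℝ E]

lemma sigma_add_self {σ : Set E} (hσ : IsPolyhedralCone σ) : σ + σ = σ := by
  apply Set.Subset.antisymm
  · rintro x ⟨y, hy, z, hz, rfl⟩
    exact cone_add_mem hσ hy hz
  · intro x hx
    exact ⟨x, hx, 0, cone_zero_mem hσ, add_zero x⟩

lemma isSigmaPolyhedron_add {σ : Set E} (hσ : IsPolyhedralCone σ) {Δ₁ Δ₂ : Set E}
    (h₁ : IsSigmaPolyhedron σ Δ₁) (h₂ : IsSigmaPolyhedron σ Δ₂) :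
    IsSigmaPolyhedron σ (Δ₁ + Δ₂) := by
  classical
  obtain ⟨F₁, hF₁, rfl⟩ := h₁
  obtain ⟨F₂, hF₂, rfl⟩ := h₂
  refine ⟨F₁ + F₂, hF₁.add hF₂, ?_⟩
  rw [Finset.coe_add, convexHull_add, add_add_add_comm, sigma_add_self hσ]

lemma isSigmaPolyhedron_sum {σ : Set E} (hσ : IsPolyhedralCone σ) {ι : Type*}
    (s : Finset ι) (hs : s.Nonempty) (Δ : ι → Set E)
    (h : ∀ i ∈ s, IsSigmaPolyhedron σ (Δ i)) :
    IsSigmaPolyhedron σ (∑ i ∈ s, Δ i) := by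
  classical
  induction hs using Finset.Nonempty.cons_induction with
  | singleton a => simpa using h a (by simp)
  | cons a s ha hs ih =>
    rw [Finset.sum_cons]
    exact isSigmaPolyhedron_add hσ (h a (Finset.mem_cons_self a s))
      (ih (fun i hi => h i (Finset.mem_cons_of_mem hi)))
end Aux3

section Main
variable {E : Type*} [NormedAddCommGroup E] [InnerProductSpace ℝ E]

lemma interior_normalCone_nonempty [FiniteDimensional ℝ E] {σ : Set E}
    (hσ : IsPolyhedralCone σ) (hpointed : σ ∩ (-σ) = {0}) {Δ : Set E}
    (hΔ : IsSigmaPolyhedron σ Δ) {v : E} (hv : v ∈ Δ.extremePoints ℝ) :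
    (interior (normalCone Δ v)).Nonempty := by
  classical
  obtain ⟨F, hFne, hΔeq⟩ := hΔ
  obtain ⟨S, hSeq⟩ := hσ
  have hσ' : IsPolyhedralCone σ := ⟨S, hSeq⟩
  have hgen : ∀ s ∈ S, s ∈ σ := by
    intro s hs
    rw [hSeq]
    refine ⟨fun t => if t = s then 1 else 0, fun t => by positivity, ?_⟩
    rw [Finset.sum_eq_single s]
    · simp
    · intro b _ hb; simp [hb]
    · intro h; exact absurd hs h
  have hΔconv : Convex ℝ Δ := hΔeq ▸ (convex_convexHull ℝ _).add (cone_convex hσ')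
  have hvΔ : v ∈ Δ := hv.1
  have hΔσ : ∀ x ∈ Δ, ∀ s ∈ σ, x + s ∈ Δ := by
    intro x hx s hs
    rw [hΔeq] at hx ⊢
    obtain ⟨p, hp, s₀, hs₀, rfl⟩ := hx
    exact ⟨p, hp, s₀ + s, cone_add_mem hσ' hs₀ hs, (add_assoc p s₀ s).symm⟩
  have hFΔ : convexHull ℝ (↑F : Set E) ⊆ Δ := by
    intro p hp; rw [hΔeq]; exact ⟨p, hp, 0, cone_zero_mem hσ', add_zero p⟩
  have hkey : ∀ q ∈ Δ, ∀ s' ∈ σ, v = q + s' → q = v ∧ s' = 0 := by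
    intro q hq s' hs' hqs
    have h2 : q + (s' + s') ∈ Δ := hΔσ q hq _ (cone_add_mem hσ' hs' hs')
    have hseg : v ∈ openSegment ℝ q (q + (s' + s')) := by
      refine ⟨1/2, 1/2, by norm_num, by norm_num, by norm_num, ?_⟩
      rw [hqs]; module
    obtain h3 := hv.2 hq h2 hseg
    refine ⟨h3, ?_⟩
    have h5 := hqs
    rw [h3] at h5
    exact left_eq_add.1 h5
  have hnot : v ∉ convexHull ℝ (Δ \ {v}) :=
    ((hΔconv.mem_extremePoints_iff_mem_diff_convexHull_diff).1 hv).2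
  set A : Set E := ((fun f => f - v) '' (↑F : Set E)) \ {0} with hA
  set B : Set E := (↑S : Set E) \ {0} with hB
  have hABfin : (A ∪ B).Finite :=
    ((F.finite_toSet.image _).diff).union (S.finite_toSet.diff)
  have hsep : (0:E) ∉ convexHull ℝ (A ∪ B) := by
    intro h0
    rw [convexHull_eq] at h0
    obtain ⟨ι, t, w, z, hw0, hw1, hz, hcm⟩ := h0
    rw [Finset.centerMass_eq_of_sum_1 _ _ hw1] at hcm
    set tA := t.filter (fun i => z i ∈ A) with htAdef
    set tB := t.filter (fun i => z i ∉ A) with htBdef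
    have hzB : ∀ i ∈ tB, z i ∈ B := by
      intro i hi
      rw [htBdef, Finset.mem_filter] at hi
      rcases hz i hi.1 with h | h
      · exact absurd h hi.2
      · exact h
    have hwA0' : ∀ i ∈ tA, 0 ≤ w i :=
      fun i hi => hw0 i (Finset.mem_of_mem_filter i hi)
    have hwB0' : ∀ i ∈ tB, 0 ≤ w i :=
      fun i hi => hw0 i (Finset.mem_of_mem_filter i hi)
    have hsplit : (∑ i ∈ tA, w i • z i) + ∑ i ∈ tB, w i • z i = 0 := by
      rw [htAdef, htBdef, Finset.sum_filter_add_sum_filter_not]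
      exact hcm
    have hwsplit : (∑ i ∈ tA, w i) + ∑ i ∈ tB, w i = 1 := by
      rw [htAdef, htBdef, Finset.sum_filter_add_sum_filter_not]
      exact hw1
    have hs'σ : ∑ i ∈ tB, w i • z i ∈ σ :=
      cone_sum_mem hσ' _ _ _ hwB0' (fun i hi => hgen _ (hzB i hi).1)
    have hθ0 : 0 ≤ ∑ i ∈ tA, w i := Finset.sum_nonneg hwA0'
    rcases eq_or_lt_of_le hθ0 with hθeq | hθpos
    · -- all weight on the cone part
      have hwA0 : ∀ i ∈ tA, w i = 0 :=
        (Finset.sum_eq_zero_iff_of_nonneg hwA0').1 hθeq.symm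
      have hsumA0 : ∑ i ∈ tA, w i • z i = 0 :=
        Finset.sum_eq_zero (fun i hi => by rw [hwA0 i hi, zero_smul])
      have hsum0 : ∑ i ∈ tB, w i • z i = 0 := by
        rw [hsumA0, zero_add] at hsplit; exact hsplit
      have hwB1 : ∑ i ∈ tB, w i = 1 := by
        rw [← hθeq, zero_add] at hwsplit; exact hwsplit
      obtain ⟨i₀, hi₀, hwi₀⟩ : ∃ i ∈ tB, 0 < w i := by
        by_contra hcon
        push_neg at hcon
        have : ∑ i ∈ tB, w i = 0 :=
          Finset.sum_eq_zero (fun i hi => le_antisymm (hcon i hi) (hwB0' i hi))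
        rw [this] at hwB1; exact zero_ne_one hwB1
      have hrest : w i₀ • z i₀ + ∑ i ∈ tB.erase i₀, w i • z i = 0 := by
        rw [← hsum0, Finset.add_sum_erase tB (fun i => w i • z i) hi₀]
      have h1 : ∑ i ∈ tB.erase i₀, w i • z i = -(w i₀ • z i₀) :=
        eq_neg_of_add_eq_zero_right hrest
      have hneg : -(z i₀) ∈ σ := by
        have hcalc : -(z i₀) = ∑ i ∈ tB.erase i₀, ((w i₀)⁻¹ * w i) • z i := by
          rw [show (∑ i ∈ tB.erase i₀, ((w i₀)⁻¹ * w i) • z i)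
              = (w i₀)⁻¹ • ∑ i ∈ tB.erase i₀, w i • z i by
            rw [Finset.smul_sum]; simp [smul_smul]]
          rw [h1, smul_neg, smul_smul, inv_mul_cancel₀ hwi₀.ne', one_smul]
        rw [hcalc]
        exact cone_sum_mem hσ' _ _ _
          (fun i hi => mul_nonneg (inv_nonneg.2 hwi₀.le)
            (hwB0' i (Finset.mem_of_mem_erase hi)))
          (fun i hi => hgen _ (hzB i (Finset.mem_of_mem_erase hi)).1)
      have hz0 : z i₀ ∈ σ ∩ (-σ) := ⟨hgen _ (hzB i₀ hi₀).1, by rwa [Set.mem_neg]⟩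
      rw [hpointed] at hz0
      exact (hzB i₀ hi₀).2 hz0
    · -- positive weight on the F part
      have hq : tA.centerMass w (fun i => z i + v) ∈ convexHull ℝ (Δ \ {v}) := by
        refine Finset.centerMass_mem_convexHull _ hwA0' hθpos ?_
        intro i hi
        have hiA : z i ∈ A := (Finset.mem_filter.1 hi).2
        obtain ⟨⟨f, hf, hfv⟩, hz0⟩ := hiA
        constructor
        · have : z i + v = f := by
            simp only [← hfv]; abel
          
          rw [this]
          exact hFΔ (subset_convexHull ℝ _ hf)
        · intro hcon
          rw [Set.mem_singleton_iff] at hcon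
          exact hz0 (Set.mem_singleton_iff.2 (add_eq_right.1 hcon))
      set θ := ∑ i ∈ tA, w i with hθdef
      set q := tA.centerMass w (fun i => z i + v) with hqdef
      have hqΔ : q ∈ Δ := by
        have h2 := convexHull_mono Set.diff_subset hq
        rwa [hΔconv.convexHull_eq] at h2
      have hqalg : θ • q = (∑ i ∈ tA, w i • z i) + θ • v := by
        rw [hqdef, Finset.centerMass, ← hθdef, smul_smul,
          mul_inv_cancel₀ hθpos.ne', one_smul]
        rw [show (∑ i ∈ tA, w i • (z i + v)) = (∑ i ∈ tA, w i • z i) + ∑ i ∈ tA, w i • v by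
          rw [← Finset.sum_add_distrib]
          exact Finset.sum_congr rfl (fun i _ => smul_add (w i) (z i) v)]
        rw [← Finset.sum_smul, ← hθdef]
      set s' := ∑ i ∈ tB, w i • z i with hs'def
      have h1 : θ • q + s' = θ • v := by
        rw [hqalg]
        have : (∑ i ∈ tA, w i • z i) + θ • v + s' = ((∑ i ∈ tA, w i • z i) + s') + θ • v := by
          abel
        rw [this, hs'def, hsplit, zero_add]
      have hveq : v = q + θ⁻¹ • s' := by
        have h2 : θ⁻¹ • (θ • q + s') = θ⁻¹ • (θ • v) := by rw [h1]
        rw [smul_add, smul_smul, smul_smul, inv_mul_cancel₀ hθpos.ne', one_smul,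
          one_smul] at h2
        exact h2.symm
      have hs'' : θ⁻¹ • s' ∈ σ := cone_smul_mem hσ' (inv_nonneg.2 hθpos.le) hs'σ
      obtain ⟨hq_eq, _⟩ := hkey q hqΔ _ hs'' hveq
      rw [hq_eq] at hq
      exact hnot hq
  -- separation
  have hclosed : IsClosed (convexHull ℝ (A ∪ B)) := hABfin.isClosed_convexHull ℝ
  obtain ⟨f, c, hfc, hc0⟩ :=
    geometric_hahn_banach_closed_point (convex_convexHull ℝ _) hclosed hsep
  have hc0' : c < 0 := by simpa using hc0
  set u : E := (InnerProductSpace.toDual ℝ E).symm (-f) with hu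
  have hinner : ∀ x : E, (inner ℝ u x : ℝ) = -(f x) := by
    intro x
    rw [hu, InnerProductSpace.toDual_symm_apply]
    simp
  have hupos : ∀ x ∈ A ∪ B, 0 < (inner ℝ u x : ℝ) := by
    intro x hx
    have := hfc x (subset_convexHull ℝ _ hx)
    rw [hinner]; linarith
  set U : Set E := ⋂ x ∈ A ∪ B, {u' : E | 0 < (inner ℝ u' x : ℝ)} with hUdef
  have hUopen : IsOpen U :=
    hABfin.isOpen_biInter
      (fun x _ => isOpen_lt continuous_const (continuous_id.inner continuous_const))
  have hUsub : U ⊆ normalCone Δ v := by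
    intro u' hu'
    have hu'' : ∀ x ∈ A ∪ B, 0 < (inner ℝ u' x : ℝ) := fun x hx =>
      Set.mem_iInter₂.1 hu' x hx
    intro w hw
    rw [hΔeq] at hw
    obtain ⟨p, hp, s, hs, rfl⟩ := hw
    have hpineq : (inner ℝ u' v : ℝ) ≤ inner ℝ u' p := by
      have hhalf : convexHull ℝ (↑F : Set E) ⊆ {x : E | (inner ℝ u' v : ℝ) ≤ inner ℝ u' x} := by
        apply convexHull_min
        · intro f' hf'
          by_cases hfv : f' = v
          · simp [hfv]
          · have hmemA : f' - v ∈ A := ⟨⟨f', hf', rfl⟩, by simp [sub_eq_zero, hfv]⟩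
            have h3 := hu'' _ (Or.inl hmemA)
            rw [inner_sub_right] at h3
            simp only [Set.mem_setOf_eq]
            linarith
        · exact convex_halfSpace_ge
            ⟨fun a b => inner_add_right _ _ _, fun r a => real_inner_smul_right _ _ _⟩ _
      exact hhalf hp
    have hsineq : (0:ℝ) ≤ inner ℝ u' s := by
      rw [hSeq] at hs
      obtain ⟨cc, hcc, rfl⟩ := hs
      rw [inner_sum]
      refine Finset.sum_nonneg (fun x hx => ?_)
      rw [real_inner_smul_right]
      rcases eq_or_ne x 0 with rfl | hx0
      · simp
      · exact mul_nonneg (hcc x)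
          (hu'' x (Or.inr ⟨hx, by simpa using hx0⟩)).le
    calc (inner ℝ u' v : ℝ) ≤ inner ℝ u' p := hpineq
      _ ≤ inner ℝ u' p + inner ℝ u' s := by linarith
      _ = inner ℝ u' (p + s) := (inner_add_right _ _ _).symm
  have huU : u ∈ U := Set.mem_iInter₂.2 hupos
  exact ⟨u, interior_maximal hUsub hUopen huU⟩
end Main

/-- Lemma on Minkowski sums: for extreme points `vᵢ` of `σ`-polyhedra `Δᵢ`,
the sum `v₁ + ⋯ + v_r` is an extreme point of `Δ₁ + ⋯ + Δ_r` if and only if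
the intersection `λ₁ ∩ ⋯ ∩ λ_r` of the normal cones has nonempty interior;
in that case this intersection is the normal cone of the sum at `v₁ + ⋯ + v_r`. -/
theorem extremePoint_minkowski_sum_iff_interior_nonempty
    {E : Type*} [NormedAddCommGroup E] [InnerProductSpace ℝ E]
    [FiniteDimensional ℝ E] {r : ℕ}
    (σ : Set E) (hσ : IsPolyhedralCone σ) (hpointed : σ ∩ (-σ) = {0})
    (Δ : Fin r → Set E) (hΔ : ∀ i, IsSigmaPolyhedron σ (Δ i))
    (v : Fin r → E) (hv : ∀ i, v i ∈ (Δ i).extremePoints ℝ) :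
    ((∑ i, v i) ∈ (∑ i, Δ i).extremePoints ℝ ↔
      (interior (⋂ i, normalCone (Δ i) (v i))).Nonempty) ∧
    ((∑ i, v i) ∈ (∑ i, Δ i).extremePoints ℝ →
      (⋂ i, normalCone (Δ i) (v i)) = normalCone (∑ i, Δ i) (∑ i, v i)) := by
  have hNC := normalCone_sum Δ v (fun i => (hv i).1)
  have hmem : (∑ i, v i) ∈ ∑ i, Δ i :=
    Set.finset_sum_mem_finset_sum _ _ _ (fun i _ => (hv i).1)
  refine ⟨⟨fun hext => ?_, fun hint => ?_⟩, fun _ => hNC⟩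
  · rcases Nat.eq_zero_or_pos r with hr | hr
    · subst hr
      exact ⟨0, by simp⟩
    · have : Nonempty (Fin r) := Fin.pos_iff_nonempty.1 hr
      rw [hNC]
      exact interior_normalCone_nonempty hσ hpointed
        (isSigmaPolyhedron_sum hσ Finset.univ Finset.univ_nonempty Δ (fun i _ => hΔ i)) hext
  · rw [hNC] at hint
    exact mem_extremePoints_of_interior_normalCone hmem hint
end

section
/- Let E be a finite-dimensional real inner product space, let σ ⊆ E be a pointed polyhedral cone, let Δ ⊆ E be a σ-polyhedron, and let v ∈ Δ. Then v is an extreme point of Δ if and only if the normal cone N(Δ, v) has nonempty interior in E. (This identifies the vertices of a σ-polyhedron with the full-dimensional, i.e. maximal, cones of its normal quasifan, the correspondence F ↦ λ(F) used throughout the paper.) -/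
open Pointwise

/-- A point of a `σ`-polyhedron (with `σ` pointed) is a vertex if and only if
its normal cone is full-dimensional, i.e. has nonempty interior. -/
theorem extremePoint_iff_normalCone_interior_nonempty
    {E : Type*} [NormedAddCommGroup E] [InnerProductSpace ℝ E]
    [FiniteDimensional ℝ E]
    (σ : Set E) (hσ : IsPolyhedralCone σ) (hpointed : σ ∩ (-σ) = {0})
    (Δ : Set E) (hΔ : IsSigmaPolyhedron σ Δ) (v : E) (hv : v ∈ Δ) :
    v ∈ Δ.extremePoints ℝ ↔ (interior (normalCone Δ v)).Nonempty := by
  classical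
  obtain ⟨S, hS⟩ := hσ
  obtain ⟨F, hFne, hF⟩ := hΔ
  -- basic facts about σ
  have hzero : (0:E) ∈ σ := by
    rw [hS]; exact ⟨0, fun _ => le_rfl, by simp⟩
  have hSsub : (↑S : Set E) ⊆ σ := by
    intro s hs; rw [hS]
    refine ⟨fun t => if t = s then 1 else 0, fun t => by dsimp only; split <;> norm_num, ?_⟩
    simp [ite_smul, Finset.sum_ite_eq', Finset.mem_coe.1 hs]
  have hsmul : ∀ (c:ℝ), 0 ≤ c → ∀ x ∈ σ, c • x ∈ σ := by
    rintro c hc x hx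
    rw [hS] at hx ⊢
    obtain ⟨k, hk, rfl⟩ := hx
    exact ⟨fun s => c * k s, fun s => mul_nonneg hc (hk s),
      by rw [Finset.smul_sum]; simp [mul_smul]⟩
  have hadd : ∀ x ∈ σ, ∀ y ∈ σ, x + y ∈ σ := by
    rintro x hx y hy
    rw [hS] at hx hy ⊢
    obtain ⟨k, hk, rfl⟩ := hx
    obtain ⟨k', hk', rfl⟩ := hy
    exact ⟨fun s => k s + k' s, fun s => add_nonneg (hk s) (hk' s),
      by rw [← Finset.sum_add_distrib]; simp [add_smul]⟩
  have hsum_mem : ∀ (T : Finset E) (g : E → E), (∀ t ∈ T, g t ∈ σ) → ∑ t ∈ T, g t ∈ σ := by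
    intro T g hg
    classical
    induction T using Finset.induction_on with
    | empty => simpa using hzero
    | insert _ _ hnotmem ih =>
      rename_i a T'
      rw [Finset.sum_insert hnotmem]
      exact hadd _ (hg a (Finset.mem_insert_self a T'))
        _ (ih fun t ht => hg t (Finset.mem_insert_of_mem ht))
  have hconvsub : convexHull ℝ (↑F : Set E) ⊆ Δ := by
    intro p hp
    rw [hF]
    exact ⟨p, hp, 0, hzero, add_zero p⟩
  classical
  set D : Finset E := ((F.image (fun f => f - v)) ∪ S).erase 0 with hD
  have hD0 : (0:E) ∉ D := Finset.notMem_erase _ _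
  -- Claim A : strict positivity on D implies membership in the normal cone
  have hUsub : ∀ u : E, (∀ d ∈ D, (0:ℝ) < inner ℝ u d) → u ∈ normalCone Δ v := by
    intro u hu w hw
    have hS_nonneg : ∀ t ∈ S, (0:ℝ) ≤ inner ℝ u t := by
      intro t ht
      rcases eq_or_ne t 0 with rfl | hne
      · simp
      · exact le_of_lt (hu t (Finset.mem_erase.2 ⟨hne, Finset.mem_union_right _ ht⟩))
    have hF_nonneg : ∀ f ∈ F, (0:ℝ) ≤ inner ℝ u (f - v) := by
      intro f hf
      rcases eq_or_ne (f - v) 0 with h0 | hne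
      · rw [h0]; simp
      · exact le_of_lt (hu _ (Finset.mem_erase.2 ⟨hne,
          Finset.mem_union_left _ (Finset.mem_image_of_mem _ hf)⟩))
    rw [hF] at hw
    obtain ⟨p, hp, s, hs, rfl⟩ := hw
    have hinner_s : (0:ℝ) ≤ inner ℝ u s := by
      rw [hS] at hs
      obtain ⟨c, hc, rfl⟩ := hs
      rw [inner_sum]
      refine Finset.sum_nonneg fun t ht => ?_
      rw [real_inner_smul_right]
      exact mul_nonneg (hc t) (hS_nonneg t ht)
    have hinner_p : (inner ℝ u v : ℝ) ≤ inner ℝ u p := by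
      rw [Finset.convexHull_eq] at hp
      obtain ⟨wt, hwt0, hwt1, hwc⟩ := hp
      rw [Finset.centerMass_eq_of_sum_1 _ _ hwt1] at hwc
      have : p - v = ∑ f ∈ F, wt f • (f - v) := by
        simp only [smul_sub, Finset.sum_sub_distrib, ← Finset.sum_smul, hwt1, one_smul]
        rw [← hwc]; simp
      have h2 : (0:ℝ) ≤ inner ℝ u (p - v) := by
        rw [this, inner_sum]
        refine Finset.sum_nonneg fun f hf => ?_
        rw [real_inner_smul_right]
        exact mul_nonneg (hwt0 f hf) (hF_nonneg f hf)
      rw [inner_sub_right] at h2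
      linarith
    rw [inner_add_right]
    linarith
  constructor
  · -- extreme point ⇒ full-dimensional normal cone
    intro hext
    have h0 : (0:E) ∉ convexHull ℝ (↑D : Set E) := by
      intro h0
      rw [Finset.convexHull_eq] at h0
      obtain ⟨w, hw0, hw1, hwc⟩ := h0
      rw [Finset.centerMass_eq_of_sum_1 _ _ hw1] at hwc
      simp only [id] at hwc
      set D₁ : Finset E := D.filter (fun d => d ∈ S) with hD₁
      set D₂ : Finset E := D.filter (fun d => d ∉ S) with hD₂
      have hsplit : ∑ d ∈ D₂, w d • d + ∑ d ∈ D₁, w d • d = 0 := by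
        rw [hD₁, hD₂, Finset.sum_filter_not_add_sum_filter]
        exact hwc
      have hsplit1 : ∑ d ∈ D₂, w d + ∑ d ∈ D₁, w d = 1 := by
        rw [hD₁, hD₂, Finset.sum_filter_not_add_sum_filter]
        exact hw1
      have hs₀ : ∑ d ∈ D₁, w d • d ∈ σ :=
        hsum_mem D₁ _ (fun d hd => hsmul _ (hw0 d (Finset.mem_of_mem_filter d hd))
          _ (hSsub (Finset.mem_coe.2 ((Finset.mem_filter.1 hd).2))))
      set lam : ℝ := ∑ d ∈ D₂, w d with hlam
      have hlam0 : 0 ≤ lam :=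
        Finset.sum_nonneg fun d hd => hw0 d (Finset.mem_of_mem_filter d hd)
      have hD₂F : ∀ d ∈ D₂, d + v ∈ (↑F : Set E) \ {v} := by
        intro d hd
        have hdD : d ∈ D := Finset.mem_of_mem_filter d hd
        have hdS : d ∉ S := (Finset.mem_filter.1 hd).2
        have : d ∈ F.image (fun f => f - v) := by
          rcases Finset.mem_union.1 (Finset.mem_of_mem_erase hdD) with h | h
          · exact h
          · exact absurd h hdS
        obtain ⟨f, hf, hfd⟩ := Finset.mem_image.1 this
        have hfv : d + v = f := by rw [← hfd]; abel
        refine ⟨by rw [hfv]; exact hf, ?_⟩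
        simp only [Set.mem_singleton_iff]
        intro hcon
        exact (Finset.mem_erase.1 hdD).1 (add_eq_right.1 hcon)
      rcases eq_or_lt_of_le hlam0 with hlameq | hlampos
      · -- lam = 0 : pointedness contradiction
        have hzeroD₂ : ∀ d ∈ D₂, w d = 0 := by
          intro d hd
          have := Finset.sum_eq_zero_iff_of_nonneg
            (fun d hd => hw0 d (Finset.mem_of_mem_filter d hd)) |>.1 hlameq.symm
          exact this d hd
        have hsum2 : ∑ d ∈ D₂, w d • d = 0 :=
          Finset.sum_eq_zero fun d hd => by rw [hzeroD₂ d hd, zero_smul]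
        have hs₀0 : ∑ d ∈ D₁, w d • d = 0 := by
          rw [hsum2, zero_add] at hsplit; exact hsplit
        have hsum1 : ∑ d ∈ D₁, w d = 1 := by
          rw [← hlameq, zero_add] at hsplit1; exact hsplit1
        obtain ⟨d₀, hd₀, hwd₀⟩ : ∃ d₀ ∈ D₁, 0 < w d₀ := by
          by_contra hcon
          push_neg at hcon
          have : ∑ d ∈ D₁, w d = 0 := Finset.sum_eq_zero fun d hd =>
            le_antisymm (hcon d hd) (hw0 d (Finset.mem_of_mem_filter d hd))
          rw [this] at hsum1; norm_num at hsum1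
        have hmem1 : w d₀ • d₀ ∈ σ :=
          hsmul _ (le_of_lt hwd₀) _ (hSsub (Finset.mem_coe.2 ((Finset.mem_filter.1 hd₀).2)))
        have hmem2 : -(w d₀ • d₀) ∈ σ := by
          have hrw := Finset.add_sum_erase D₁ (fun d => w d • d) hd₀
          have h' : w d₀ • d₀ + ∑ d ∈ D₁.erase d₀, w d • d = 0 := by
            rw [hrw]; exact hs₀0
          have heq : -(w d₀ • d₀) = ∑ d ∈ D₁.erase d₀, w d • d :=
            neg_eq_iff_eq_neg.2 (eq_neg_of_add_eq_zero_left h')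
          rw [heq]
          exact hsum_mem _ _ (fun d hd => hsmul _
            (hw0 d (Finset.mem_of_mem_filter d (Finset.mem_of_mem_erase hd)))
            _ (hSsub (Finset.mem_coe.2 ((Finset.mem_filter.1 (Finset.mem_of_mem_erase hd)).2))))
        have : w d₀ • d₀ ∈ σ ∩ (-σ) := ⟨hmem1, Set.mem_neg.2 hmem2⟩
        rw [hpointed] at this
        have hd₀0 : d₀ = 0 := by
          rcases smul_eq_zero.1 (Set.mem_singleton_iff.1 this) with h | h
          · exact absurd h (ne_of_gt hwd₀)
          · exact h
        exact (Finset.mem_erase.1 (Finset.mem_of_mem_filter d₀ hd₀)).1 hd₀0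
      · -- lam > 0
        set s₀ : E := ∑ d ∈ D₁, w d • d with hs₀def
        set t : E := lam⁻¹ • s₀ with ht
        have htσ : t ∈ σ := hsmul _ (inv_nonneg.2 hlam0) _ hs₀
        set p : E := D₂.centerMass w (fun d => d + v) with hp
        have hpconv : p ∈ convexHull ℝ ((↑F : Set E) \ {v}) :=
          Finset.centerMass_mem_convexHull D₂
            (fun d hd => hw0 d (Finset.mem_of_mem_filter d hd)) hlampos hD₂F
        have hpΔ : p ∈ Δ := hconvsub ((convexHull_mono Set.diff_subset) hpconv)
        have hpeq : p = v - t := by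
          rw [hp, Finset.centerMass, ← hlam]
          have : ∑ d ∈ D₂, w d • (d + v) = -s₀ + lam • v := by
            simp only [smul_add, Finset.sum_add_distrib, ← Finset.sum_smul, ← hlam]
            rw [hs₀def]
            rw [eq_neg_of_add_eq_zero_left hsplit]
          rw [this, smul_add, smul_neg, ← ht, smul_smul, inv_mul_cancel₀ (ne_of_gt hlampos), one_smul]
          abel
        have ht0 : t = 0 := by
          by_contra htne
          have hv_eq : v = p + t := by rw [hpeq]; abel
          have hp2 : p + (2:ℝ) • t ∈ Δ := by
            rw [hF]
            refine ⟨p, (convexHull_mono Set.diff_subset) hpconv, (2:ℝ) • t,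
              hsmul 2 (by norm_num) _ htσ, rfl⟩
          have hop : v ∈ openSegment ℝ p (p + (2:ℝ) • t) := by
            refine ⟨1/2, 1/2, by norm_num, by norm_num, by norm_num, ?_⟩
            rw [hv_eq]
            rw [smul_add, smul_smul]
            norm_num
            rw [← add_assoc, ← add_smul]
            norm_num
          have := hext.2 hpΔ hp2 hop
          have h2t : p + (2:ℝ) • t = v := hext.2 hp2 hpΔ (by rw [openSegment_symm]; exact hop)
          have hpv : p = v := this
          rw [hpv] at h2t
          have h2t0 : (2:ℝ) • t = 0 := by rwa [add_eq_left] at h2t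
          exact htne ((smul_eq_zero.1 h2t0).resolve_left two_ne_zero)
        -- t = 0 : v is a convex combination of F \ {v}
        have hpv : p = v := by rw [hpeq, ht0, sub_zero]
        have hvconv : v ∈ convexHull ℝ ((↑F : Set E) \ {v}) := hpv ▸ hpconv
        have hvext' : v ∈ (convexHull ℝ ((↑F : Set E) \ {v})).extremePoints ℝ :=
          ⟨hvconv, fun x₁ h1 x₂ h2 ho =>
            hext.2 (hconvsub ((convexHull_mono Set.diff_subset) h1))
              (hconvsub ((convexHull_mono Set.diff_subset) h2)) ho⟩
        have := extremePoints_convexHull_subset hvext'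
        exact this.2 rfl
    -- separate 0 from conv D
    have hclosed : IsClosed (convexHull ℝ (↑D : Set E)) :=
      (D.finite_toSet.isCompact_convexHull ℝ).isClosed
    obtain ⟨f, c, hc1, hc2⟩ :=
      geometric_hahn_banach_point_closed (convex_convexHull ℝ _) hclosed h0
    rw [map_zero] at hc1
    set u : E := (InnerProductSpace.toDual ℝ E).symm f with hu
    have hud : ∀ d ∈ D, (0:ℝ) < inner ℝ u d := by
      intro d hd
      have : (inner ℝ u d : ℝ) = f d := InnerProductSpace.toDual_symm_apply
      rw [this]
      exact lt_trans hc1 (hc2 d (subset_convexHull ℝ _ (Finset.mem_coe.2 hd)))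
    refine ⟨u, ?_⟩
    have hopen : IsOpen {x : E | ∀ d ∈ D, (0:ℝ) < inner ℝ x d} := by
      have : {x : E | ∀ d ∈ D, (0:ℝ) < inner ℝ x d} =
          ⋂ d ∈ D, {x : E | (0:ℝ) < inner ℝ x d} := by
        ext x; simp
      rw [this]
      refine isOpen_biInter_finset fun d _ => ?_
      exact isOpen_lt continuous_const (continuous_id.inner continuous_const)
    exact interior_maximal (fun x hx => hUsub x hx) hopen hud
  · -- full-dimensional normal cone ⇒ extreme point
    rintro ⟨u, hu⟩
    refine ⟨hv, fun x hx y hy hxy => ?_⟩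
    obtain ⟨a, b, ha, hb, hab, hveq⟩ := hxy
    obtain ⟨ε, hε, hball⟩ := Metric.mem_nhds_iff.1 (mem_interior_iff_mem_nhds.1 hu)
    have hkey : ∀ u' ∈ Metric.ball u ε, (inner ℝ u' (x - v) : ℝ) = 0 := by
      intro u' hu'
      have hN : u' ∈ normalCone Δ v := hball hu'
      have h1 : (inner ℝ u' v : ℝ) ≤ inner ℝ u' x := hN x hx
      have h2 : (inner ℝ u' v : ℝ) ≤ inner ℝ u' y := hN y hy
      have h3 : a * (inner ℝ u' x : ℝ) + b * inner ℝ u' y = inner ℝ u' v := by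
        rw [← hveq, inner_add_right, real_inner_smul_right, real_inner_smul_right]
      have h4 : b * (inner ℝ u' v : ℝ) ≤ b * inner ℝ u' y :=
        mul_le_mul_of_nonneg_left h2 hb.le
      have h5 : (1 - b) * (inner ℝ u' v : ℝ) = a * inner ℝ u' v := by
        rw [← hab]; ring
      have h6 : a * (inner ℝ u' x : ℝ) ≤ a * inner ℝ u' v := by linarith
      have h7 : a * (inner ℝ u' v : ℝ) ≤ a * inner ℝ u' x :=
        mul_le_mul_of_nonneg_left h1 ha.le
      have h8 : (inner ℝ u' x : ℝ) = inner ℝ u' v :=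
        mul_left_cancel₀ (ne_of_gt ha) (le_antisymm h6 h7)
      rw [inner_sub_right, h8, sub_self]
    have hxv : x = v := by
      set t : ℝ := ε / (2 * (‖x - v‖ + 1)) with htdef
      have htpos : 0 < t := by positivity
      have hmem : u + t • (x - v) ∈ Metric.ball u ε := by
        rw [Metric.mem_ball, dist_eq_norm]
        simp only [add_sub_cancel_left]
        rw [norm_smul, Real.norm_eq_abs, abs_of_pos htpos]
        rw [htdef, div_mul_eq_mul_div, div_lt_iff₀ (by positivity)]
        nlinarith [mul_nonneg hε.le (norm_nonneg (x - v))]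
      have h1 := hkey u (Metric.mem_ball_self hε)
      have h2 := hkey _ hmem
      rw [inner_add_left, real_inner_smul_left, h1, zero_add,
        real_inner_self_eq_norm_sq] at h2
      have hsq : ‖x - v‖ ^ 2 = 0 := by
        rcases mul_eq_zero.1 h2 with h | h
        · exact absurd h (ne_of_gt htpos)
        · exact h
      have : ‖x - v‖ = 0 := by
        simpa using pow_eq_zero_iff (two_ne_zero) |>.1 hsq
      rw [← sub_eq_zero]
      exact norm_eq_zero.1 this
    exact hxv
end

section
/- Let E be a finite-dimensional real inner product space, let σ ⊆ E be a convex cone with 0 ∈ σ, let F ⊆ E be a finite nonempty subset, and set Δ := convexHull(F) + σ. For u ∈ E the following are equivalent: (i) the function w ↦ ⟪u, w⟫ is bounded below on Δ; (ii) u belongs to the dual cone σ∨ = {u : ⟪u, s⟫ ≥ 0 for all s ∈ σ}. Moreover, if these hold, then the infimum of ⟪u, ·⟫ over Δ equals the minimum of ⟪u, p⟫ over p ∈ F. (This shows that the evaluation eval_u(Δ) = min_{v∈Δ} ⟪u, v⟫ of a polyhedral coefficient, used to define the evaluations 𝔇(u) of a polyhedral divisor, is well defined exactly for u in the dual cone ω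 of the tail cone σ.) -/
open Pointwise

/-- For `Δ = convexHull F + σ` with `σ` a convex cone containing `0`,
the linear functional `⟪u, ·⟫` is bounded below on `Δ` if and only if `u`
belongs to the dual cone of `σ`; in that case, its infimum on `Δ` equals
the minimum of `⟪u, p⟫` over `p ∈ F`. -/
theorem inner_bddBelow_iff_mem_dualCone
    {E : Type*} [NormedAddCommGroup E] [InnerProductSpace ℝ E]
    [FiniteDimensional ℝ E]
    (σ : Set E) (h0 : (0 : E) ∈ σ)
    (hadd : ∀ x ∈ σ, ∀ y ∈ σ, x + y ∈ σ)
    (hsmul : ∀ c : ℝ, 0 ≤ c → ∀ x ∈ σ, c • x ∈ σ)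
    (F : Finset E) (hF : F.Nonempty) (u : E) :
    (BddBelow ((fun w => (inner ℝ u w : ℝ)) '' (convexHull ℝ (↑F : Set E) + σ)) ↔
      ∀ s ∈ σ, 0 ≤ (inner ℝ u s : ℝ)) ∧
    ((∀ s ∈ σ, 0 ≤ (inner ℝ u s : ℝ)) →
      IsGLB ((fun w => (inner ℝ u w : ℝ)) '' (convexHull ℝ (↑F : Set E) + σ))
        (F.inf' hF fun p => (inner ℝ u p : ℝ))) := by
  set m := F.inf' hF fun p => (inner ℝ u p : ℝ) with hm
  have hlin : IsLinearMap ℝ fun y : E => (inner ℝ u y : ℝ) :=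
    ⟨fun x y => inner_add_right u x y, fun c x => real_inner_smul_right u x c⟩
  have key : (∀ s ∈ σ, 0 ≤ (inner ℝ u s : ℝ)) →
      ∀ w ∈ convexHull ℝ (↑F : Set E) + σ, m ≤ (inner ℝ u w : ℝ) := by
    intro hu w hw
    obtain ⟨x, hx, s, hs, rfl⟩ := hw
    have hx' : m ≤ (inner ℝ u x : ℝ) := by
      have hsub : convexHull ℝ (↑F : Set E) ⊆ {y : E | m ≤ (inner ℝ u y : ℝ)} := by
        apply convexHull_min
        · intro p hp
          exact Finset.inf'_le (fun q => (inner ℝ u q : ℝ)) (by exact_mod_cast hp)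
        · exact convex_halfSpace_ge hlin m
      exact hsub hx
    have := hu s hs
    rw [inner_add_right]
    linarith
  have hmem : (inner ℝ u : E → ℝ) '' (convexHull ℝ (↑F : Set E) + σ) ∈ Set.univ := trivial
  constructor
  · constructor
    · rintro ⟨b, hb⟩ s hs
      by_contra h
      push_neg at h
      obtain ⟨p, hp⟩ := hF
      set a := (inner ℝ u p : ℝ) with ha
      set c := (inner ℝ u s : ℝ) with hc
      set t : ℝ := max 0 ((b - a - 1) / c) with ht
      have ht0 : 0 ≤ t := le_max_left _ _
      have hmemΔ : p + t • s ∈ convexHull ℝ (↑F : Set E) + σ :=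
        ⟨p, subset_convexHull ℝ _ (by exact_mod_cast hp), t • s, hsmul t ht0 s hs, rfl⟩
      have hbd : b ≤ (inner ℝ u (p + t • s) : ℝ) := hb ⟨_, hmemΔ, rfl⟩
      have hval : (inner ℝ u (p + t • s) : ℝ) = a + t * c := by
        rw [inner_add_right, real_inner_smul_right]
      have htc : t * c ≤ b - a - 1 := by
        have h1 : (b - a - 1) / c ≤ t := le_max_right _ _
        have := mul_le_mul_of_nonpos_right h1 (le_of_lt h)
        rwa [div_mul_cancel₀ _ (ne_of_lt h)] at this
      rw [hval] at hbd
      linarith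
    · intro hu
      exact ⟨m, by rintro y ⟨w, hw, rfl⟩; exact key hu w hw⟩
  · intro hu
    constructor
    · rintro y ⟨w, hw, rfl⟩; exact key hu w hw
    · intro b hb
      obtain ⟨p, hp, hpm⟩ := Finset.exists_mem_eq_inf' hF fun p => (inner ℝ u p : ℝ)
      have hmemΔ : p ∈ convexHull ℝ (↑F : Set E) + σ := by
        refine ⟨p, subset_convexHull ℝ _ (by exact_mod_cast hp), 0, h0, by simp⟩
      have : b ≤ (inner ℝ u p : ℝ) := hb ⟨p, hmemΔ, rfl⟩
      rw [hm, hpm]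
      exact this
end

section
/- Let E be a finite-dimensional real inner product space, let σ ⊆ E be a pointed polyhedral cone, let Δ ⊆ E be a σ-polyhedron, and let u ∈ σ∨ be an element of the dual cone of σ. Then there exists an extreme point v of Δ minimizing ⟪u, ·⟫ over Δ, i.e. ⟪u, v⟫ ≤ ⟪u, w⟫ for all w ∈ Δ. Equivalently, every u in the dual cone σ∨ lies in the normal cone N(Δ, v) of some extreme point v of Δ, so the normal quasifan of Δ covers σ∨. (This is the fact that the normal quasifan Λ(Δ) subdivides the dual cone ω of σ, used in the description of the fibres of π in the paper.) -/
open Pointwise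

/-- Every `u` in the dual cone of the pointed polyhedral tail cone `σ` lies in
the normal cone of some vertex of the `σ`-polyhedron `Δ`: there is an extreme
point of `Δ` minimizing `⟪u, ·⟫` on `Δ`. -/
theorem exists_extremePoint_minimizing_of_mem_dualCone
    {E : Type*} [NormedAddCommGroup E] [InnerProductSpace ℝ E]
    [FiniteDimensional ℝ E]
    (σ : Set E) (hσ : IsPolyhedralCone σ) (hpointed : σ ∩ (-σ) = {0})
    (Δ : Set E) (hΔ : IsSigmaPolyhedron σ Δ)
    (u : E) (hu : ∀ s ∈ σ, 0 ≤ (inner ℝ u s : ℝ)) :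
    ∃ v ∈ Δ.extremePoints ℝ, ∀ w ∈ Δ, (inner ℝ u v : ℝ) ≤ inner ℝ u w := by
  classical
  obtain ⟨S, hS⟩ := hσ
  obtain ⟨F, hFne, hΔeq⟩ := hΔ
  -- 0 ∈ σ
  have hσ0 : (0 : E) ∈ σ := by
    rw [hS]; exact ⟨fun _ => 0, fun _ => le_rfl, by simp⟩
  -- Step 1: a continuous linear functional strictly positive on σ \ {0}.
  obtain ⟨f, hfpos⟩ : ∃ f : E →L[ℝ] ℝ, ∀ s ∈ σ, s ≠ 0 → 0 < f s := by
    set T : Finset E := S.erase 0 with hT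
    have h0T : (0 : E) ∉ convexHull ℝ (↑T : Set E) := by
      intro h0
      rw [Finset.mem_convexHull'] at h0
      obtain ⟨w, hw₀, hw₁, hw⟩ := h0
      obtain ⟨t, htT, hwt⟩ : ∃ t ∈ T, 0 < w t := by
        by_contra h
        push_neg at h
        have hz : ∑ y ∈ T, w y = 0 := Finset.sum_eq_zero fun y hy =>
          le_antisymm (h y hy) (hw₀ y hy)
        rw [hw₁] at hz; norm_num at hz
      have htS : t ∈ S := Finset.mem_of_mem_erase htT
      have ht0 : t ≠ 0 := Finset.ne_of_mem_erase htT
      have h1 : w t • t ∈ σ := by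
        rw [hS]
        refine ⟨fun s => if s = t then w t else 0, fun s => by positivity, ?_⟩
        symm
        rw [Finset.sum_eq_single_of_mem t htS (fun b _ hb => by simp [hb])]
        simp
      have h2 : w t • t ∈ -σ := by
        rw [Set.mem_neg, hS]
        refine ⟨fun s => if s ∈ T.erase t then w s else 0, ?_, ?_⟩
        · intro s
          dsimp only
          split
          · exact hw₀ s (Finset.mem_of_mem_erase (by assumption))
          · exact le_rfl
        · have hsub : T.erase t ⊆ S := (Finset.erase_subset _ _).trans (Finset.erase_subset _ _)
          have e1 : ∑ s ∈ S, (if s ∈ T.erase t then w s else 0) • s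
              = ∑ s ∈ T.erase t, w s • s := by
            rw [← Finset.sum_subset hsub
              (fun x _ hx => by rw [if_neg hx, zero_smul])]
            exact Finset.sum_congr rfl fun x hx => by rw [if_pos hx]
          have e2 : ∑ s ∈ T.erase t, w s • s = -(w t • t) := by
            rw [Finset.sum_erase_eq_sub htT, hw]
            abel
          rw [e1, e2]
      have hmem : w t • t ∈ σ ∩ (-σ) := ⟨h1, h2⟩
      rw [hpointed, Set.mem_singleton_iff, smul_eq_zero] at hmem
      rcases hmem with h | h
      · exact absurd h (ne_of_gt hwt)
      · exact ht0 h
    obtain ⟨f, c, hfc, hfT⟩ := geometric_hahn_banach_point_closed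
      (convex_convexHull ℝ _) ((T.finite_toSet.isCompact_convexHull (𝕜 := ℝ)).isClosed) h0T
    rw [map_zero] at hfc
    refine ⟨f, ?_⟩
    intro s hs hs0
    rw [hS] at hs
    obtain ⟨cs, hcs₀, rfl⟩ := hs
    obtain ⟨t, htS, ht0, hct⟩ : ∃ t ∈ S, t ≠ 0 ∧ 0 < cs t := by
      by_contra h
      push_neg at h
      apply hs0
      refine Finset.sum_eq_zero fun y hy => ?_
      by_cases hy0 : y = 0
      · simp [hy0]
      · have h1 := h y hy hy0
        have h2 : cs y = 0 := le_antisymm h1 (hcs₀ y)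
        simp [h2]
    have hfsum : f (∑ s ∈ S, cs s • s) = ∑ s ∈ S, cs s * f s := by
      rw [map_sum]
      exact Finset.sum_congr rfl fun s _ => by rw [map_smul, smul_eq_mul]
    rw [hfsum]
    have hterm : ∀ s ∈ S, 0 ≤ cs s * f s := by
      intro s hsS
      by_cases hs0' : s = 0
      · simp [hs0']
      · have hsT : s ∈ T := Finset.mem_erase.mpr ⟨hs0', hsS⟩
        have hfs : 0 < f s := lt_trans hfc (hfT s (subset_convexHull ℝ _ hsT))
        have := hcs₀ s
        positivity
    refine Finset.sum_pos' hterm ⟨t, htS, ?_⟩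
    have htT : t ∈ T := Finset.mem_erase.mpr ⟨ht0, htS⟩
    have hft : 0 < f t := lt_trans hfc (hfT t (subset_convexHull ℝ _ htT))
    positivity
  have hfnn : ∀ s ∈ σ, 0 ≤ f s := by
    intro s hs
    by_cases h : s = 0
    · simp [h]
    · exact le_of_lt (hfpos s hs h)
  -- Step 2: minimize ⟪u, ·⟫ on F.
  set g : E → ℝ := fun x => (inner ℝ u x : ℝ) with hg
  set m : ℝ := F.inf' hFne g with hm
  have hm_le : ∀ y ∈ F, m ≤ g y := fun y hy => Finset.inf'_le g hy
  set F' : Finset E := F.filter (fun y => g y = m) with hF'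
  have hF'ne : F'.Nonempty := by
    obtain ⟨y, hyF, hy⟩ := Finset.exists_mem_eq_inf' hFne g
    exact ⟨y, Finset.mem_filter.mpr ⟨hyF, hy.symm⟩⟩
  have hF'sub : (↑F' : Set E) ⊆ ↑F := by
    intro x hx; exact Finset.mem_coe.mpr (Finset.mem_of_mem_filter x hx)
  have hglin : IsLinearMap ℝ g := ⟨fun x y => inner_add_right u x y,
    fun c x => real_inner_smul_right u x c⟩
  have hhull_ge : ∀ x ∈ convexHull ℝ (↑F : Set E), m ≤ g x := by
    intro x hx
    have hsub : convexHull ℝ (↑F : Set E) ⊆ {x | m ≤ g x} :=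
      convexHull_min (fun y hy => hm_le y hy) (convex_halfSpace_ge hglin m)
    exact hsub hx
  have hhullF' : ∀ x ∈ convexHull ℝ (↑F' : Set E), g x = m := by
    intro x hx
    have hsub : convexHull ℝ (↑F' : Set E) ⊆ {x | g x = m} :=
      convexHull_min (fun y hy => (Finset.mem_filter.mp hy).2) (convex_hyperplane hglin m)
    exact hsub hx
  -- support lemma: min attained on hull of F forces support in F'
  have hsupport : ∀ x ∈ convexHull ℝ (↑F : Set E), g x = m → x ∈ convexHull ℝ (↑F' : Set E) := by
    intro x hx hgx
    rw [Finset.mem_convexHull'] at hx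
    obtain ⟨w, hw₀, hw₁, hwx⟩ := hx
    have hgsum : g x = ∑ y ∈ F, w y * g y := by
      rw [← hwx, hg]
      simp only []
      rw [inner_sum]
      exact Finset.sum_congr rfl fun y _ => real_inner_smul_right u y (w y)
    have hvanish : ∀ y ∈ F, y ∉ F' → w y = 0 := by
      intro y hyF hyF'
      have hym : g y ≠ m := fun h => hyF' (Finset.mem_filter.mpr ⟨hyF, h⟩)
      by_contra hwy
      have hwypos : 0 < w y := lt_of_le_of_ne (hw₀ y hyF) (Ne.symm hwy)
      have hym' : m < g y := lt_of_le_of_ne (hm_le y hyF) (Ne.symm hym)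
      have hlt : ∑ i ∈ F, w i * m < ∑ i ∈ F, w i * g i := by
        refine Finset.sum_lt_sum (fun i hi =>
          mul_le_mul_of_nonneg_left (hm_le i hi) (hw₀ i hi)) ⟨y, hyF, ?_⟩
        exact mul_lt_mul_of_pos_left hym' hwypos
      rw [← Finset.sum_mul, hw₁, one_mul, ← hgsum, hgx] at hlt
      exact lt_irrefl m hlt
    rw [Finset.mem_convexHull']
    refine ⟨w, fun y hy => hw₀ y (Finset.mem_of_mem_filter y hy), ?_, ?_⟩
    · rw [Finset.sum_subset (Finset.filter_subset _ _) hvanish]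
      exact hw₁
    · rw [Finset.sum_subset (Finset.filter_subset _ _)
        (fun y hy hy' => by rw [hvanish y hy hy', zero_smul])]
      exact hwx
  set K : Set E := convexHull ℝ (↑F' : Set E) with hK
  have hKcomp : IsCompact K := F'.finite_toSet.isCompact_convexHull (𝕜 := ℝ)
  have hKne : K.Nonempty := ⟨hF'ne.choose, subset_convexHull ℝ _ hF'ne.choose_spec⟩
  have hΔmem : ∀ x, x ∈ Δ ↔ ∃ p ∈ convexHull ℝ (↑F : Set E), ∃ s ∈ σ, p + s = x := by
    intro x; rw [hΔeq]; exact Set.mem_add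
  have hKΔ : K ⊆ Δ := by
    intro x hx
    rw [hΔmem]
    exact ⟨x, convexHull_mono hF'sub hx, 0, hσ0, add_zero x⟩
  have hΔ_ge : ∀ y ∈ Δ, m ≤ g y := by
    intro y hy
    obtain ⟨p, hp, s, hs, rfl⟩ := (hΔmem y).mp hy
    have h1 : g (p + s) = g p + g s := inner_add_right u p s
    have h2 := hu s hs
    have h3 := hhull_ge p hp
    rw [h1]
    have h2' : (0:ℝ) ≤ g s := h2
    linarith
  set M₁ : Set E := {x ∈ Δ | ∀ y ∈ Δ, g x ≤ g y} with hM₁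
  have hKM₁ : K ⊆ M₁ := by
    intro x hx
    refine ⟨hKΔ hx, fun y hy => ?_⟩
    rw [hhullF' x hx]
    exact hΔ_ge y hy
  have hM₁struct : ∀ y ∈ M₁, ∃ p ∈ K, ∃ s ∈ σ, g s = 0 ∧ p + s = y := by
    rintro y ⟨hyΔ, hymin⟩
    obtain ⟨p, hp, s, hs, rfl⟩ := (hΔmem y).mp hyΔ
    have h1 : g (p + s) = g p + g s := inner_add_right u p s
    have h2 : m ≤ g p := hhull_ge p hp
    have h3 : (0:ℝ) ≤ g s := hu s hs
    have h4 : g (p + s) ≤ m := by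
      obtain ⟨k, hk⟩ := hKne
      have h5 := hymin k (hKΔ hk)
      rw [hhullF' k hk] at h5
      exact h5
    have hgp : g p = m := by linarith
    have hgs : g s = 0 := by linarith
    exact ⟨p, hsupport p hp hgp, s, hs, hgs, rfl⟩
  obtain ⟨p₀, hp₀K, hp₀min'⟩ := hKcomp.exists_isMinOn hKne f.continuous.continuousOn
  have hp₀min : ∀ x ∈ K, f p₀ ≤ f x := fun x hx => isMinOn_iff.mp hp₀min' x hx
  set M₂ : Set E := {x ∈ M₁ | ∀ y ∈ M₁, f x ≤ f y} with hM₂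
  have hM₁_f_ge : ∀ y ∈ M₁, f p₀ ≤ f y := by
    intro y hy
    obtain ⟨p, hpK, s, hsσ, hgs, rfl⟩ := hM₁struct y hy
    have h1 : f (p + s) = f p + f s := map_add f p s
    have h2 : (0:ℝ) ≤ f s := hfnn s hsσ
    have h3 : f p₀ ≤ f p := hp₀min p hpK
    rw [h1]; linarith
  have hM₂eq : M₂ = {x ∈ K | f x = f p₀} := by
    ext x
    constructor
    · rintro ⟨hxM₁, hxmin⟩
      obtain ⟨p, hpK, s, hsσ, hgs, rfl⟩ := hM₁struct x hxM₁
      have h1 : f (p + s) = f p + f s := map_add f p s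
      have h2 : f (p + s) ≤ f p₀ := hxmin p₀ (hKM₁ hp₀K)
      have h3 : f p₀ ≤ f p := hp₀min p hpK
      have h4 : (0:ℝ) ≤ f s := hfnn s hsσ
      have hfs0 : f s = 0 := by linarith
      have hs0 : s = 0 := by
        by_contra h
        exact absurd hfs0 (ne_of_gt (hfpos s hsσ h))
      subst hs0
      refine ⟨by simpa using hpK, ?_⟩
      have h5 : f (p + 0) = f p := by rw [add_zero]
      rw [h5]
      have h6 : f (p + 0) ≤ f p₀ := h2
      rw [h5] at h6
      linarith
    · rintro ⟨hxK, hxf⟩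
      refine ⟨hKM₁ hxK, fun y hy => ?_⟩
      rw [hxf]
      exact hM₁_f_ge y hy
  have hM₂comp : IsCompact M₂ := by
    rw [hM₂eq]
    have hset : {x ∈ K | f x = f p₀} = K ∩ f ⁻¹' {f p₀} := by
      ext x; simp [Set.mem_preimage]
    rw [hset]
    exact hKcomp.inter_right (isClosed_singleton.preimage f.continuous)
  have hM₂ne : M₂.Nonempty := by
    rw [hM₂eq]; exact ⟨p₀, hp₀K, rfl⟩
  obtain ⟨v, hv⟩ := hM₂comp.extremePoints_nonempty hM₂ne
  have hexp₁ : IsExposed ℝ Δ M₁ := by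
    intro _
    refine ⟨-(innerSL ℝ u), ?_⟩
    ext x
    simp only [hM₁, Set.mem_setOf_eq, ContinuousLinearMap.neg_apply, innerSL_apply_apply,
      neg_le_neg_iff, hg]
  have hexp₂ : IsExposed ℝ M₁ M₂ := by
    intro _
    refine ⟨-f, ?_⟩
    ext x
    simp only [hM₂, Set.mem_setOf_eq, ContinuousLinearMap.neg_apply, neg_le_neg_iff]
  have hext : IsExtreme ℝ Δ M₂ := hexp₁.isExtreme.trans hexp₂.isExtreme
  refine ⟨v, hext.extremePoints_subset_extremePoints hv, ?_⟩
  have hvM₂ : v ∈ M₂ := extremePoints_subset hv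
  exact hvM₂.1.2
end
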